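/- In the saddle-point setting with inexact preconditioning, where M_U = [[F, Bᵀ],[0, H2]], M̃_U = [[P₁, Bᵀ],[0, H2]], P₁ ∈ ℝ^{n×n} is nonsingular, ‖F⁻¹P₁‖_{H1} ≤ C₄, and H = blockdiag(H1, H2), one has ‖(M̃_U⁻¹K)⁻¹‖_H ≤ (C₄ + 1) ‖(M_U⁻¹K)⁻¹‖_H. -/

import Mathlib

open Matrix

/-- The `H`-norm of a vector: `‖u‖_H = (uᵀ H u)^{1/2}`. -/
noncomputable def vnorm {α : Type*} [Fintype α] (H : Matrix α α ℝ) (u : α → ℝ) : ℝ :=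
  Real.sqrt (u ⬝ᵥ (H *ᵥ u))

/-- The weighted operator norm `‖M‖_{H1,H2} = sup_{v ≠ 0} ‖M v‖_{H2} / ‖v‖_{H1}`.
For a square matrix, `‖M‖_H = wnorm H H M`; the spectral norm is `wnorm 1 1 M`. -/
noncomputable def wnorm {α β : Type*} [Fintype α] [Fintype β]
    (H1 : Matrix α α ℝ) (H2 : Matrix β β ℝ) (M : Matrix β α ℝ) : ℝ :=
  sSup {r : ℝ | ∃ v : α → ℝ, v ≠ 0 ∧ r = vnorm H2 (M *ᵥ v) / vnorm H1 v}

namespace AuxStmt16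

variable {α : Type*} [Fintype α] [DecidableEq α] {β : Type*} [Fintype β] [DecidableEq β]

/-- Euclidean norm of a vector. -/
noncomputable def enorm (u : α → ℝ) : ℝ := Real.sqrt (u ⬝ᵥ u)

lemma dot_self_nonneg (u : α → ℝ) : 0 ≤ u ⬝ᵥ u :=
  Finset.sum_nonneg fun i _ => mul_self_nonneg _

lemma pd_dot_pos {H : Matrix α α ℝ} (hH : H.PosDef) {u : α → ℝ} (hu : u ≠ 0) :
    0 < u ⬝ᵥ (H *ᵥ u) := by
  have := hH.re_dotProduct_pos hu
  simpa using this

lemma psd_dot_nonneg {H : Matrix α α ℝ} (hH : H.PosSemidef) (u : α → ℝ) :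
    0 ≤ u ⬝ᵥ (H *ᵥ u) := by
  have := hH.re_dotProduct_nonneg u
  simpa using this

lemma vnorm_nonneg (H : Matrix α α ℝ) (u : α → ℝ) : 0 ≤ vnorm H u := Real.sqrt_nonneg _

lemma vnorm_pos {H : Matrix α α ℝ} (hH : H.PosDef) {u : α → ℝ} (hu : u ≠ 0) :
    0 < vnorm H u := Real.sqrt_pos.2 (pd_dot_pos hH hu)

lemma sq_vnorm {H : Matrix α α ℝ} (hH : H.PosSemidef) (u : α → ℝ) :
    vnorm H u ^ 2 = u ⬝ᵥ (H *ᵥ u) := Real.sq_sqrt (psd_dot_nonneg hH u)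

lemma enorm_mulVec_le (M : Matrix β α ℝ) (u : α → ℝ) :
    enorm (M *ᵥ u) ≤ Real.sqrt (∑ i, ∑ j, M i j ^ 2) * enorm u := by
  rw [enorm, enorm, ← Real.sqrt_mul (by positivity)]
  apply Real.sqrt_le_sqrt
  calc (M *ᵥ u) ⬝ᵥ (M *ᵥ u) = ∑ i, (∑ j, M i j * u j) ^ 2 := by
        simp [dotProduct, mulVec, sq]
    _ ≤ ∑ i, ((∑ j, M i j ^ 2) * ∑ j, u j ^ 2) :=
        Finset.sum_le_sum fun i _ => Finset.sum_mul_sq_le_sq_mul_sq _ _ _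
    _ = (∑ i, ∑ j, M i j ^ 2) * (u ⬝ᵥ u) := by
        rw [← Finset.sum_mul]
        congr 1
        simp [dotProduct, sq]

open scoped MatrixOrder Matrix.Norms.L2Operator in
lemma exists_psd_sqrt {H : Matrix α α ℝ} (hH : H.PosSemidef) :
    ∃ S : Matrix α α ℝ, S.PosSemidef ∧ S * S = H :=
  ⟨CFC.sqrt H, Matrix.nonneg_iff_posSemidef.mp (CFC.sqrt_nonneg H),
    CFC.sqrt_mul_sqrt_self H hH.nonneg⟩

noncomputable def _root_.Matrix.PosSemidef.sqrt {H : Matrix α α ℝ} (hH : H.PosSemidef) :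
    Matrix α α ℝ := Classical.choose (exists_psd_sqrt hH)

lemma _root_.Matrix.PosSemidef.posSemidef_sqrt {H : Matrix α α ℝ} (hH : H.PosSemidef) :
    hH.sqrt.PosSemidef := (Classical.choose_spec (exists_psd_sqrt hH)).1

lemma _root_.Matrix.PosSemidef.sqrt_mul_self {H : Matrix α α ℝ} (hH : H.PosSemidef) :
    hH.sqrt * hH.sqrt = H := (Classical.choose_spec (exists_psd_sqrt hH)).2

lemma vnorm_eq_enorm_sqrt {H : Matrix α α ℝ} (hH : H.PosDef) (u : α → ℝ) :
    vnorm H u = enorm (hH.posSemidef.sqrt *ᵥ u) := by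
  set S := hH.posSemidef.sqrt with hS
  have hSymm : Sᵀ = S := by
    have h := hH.posSemidef.posSemidef_sqrt.1
    rwa [Matrix.IsHermitian, Matrix.conjTranspose_eq_transpose_of_trivial] at h
  rw [vnorm, enorm]
  congr 1
  conv_lhs => rw [← hH.posSemidef.sqrt_mul_self]
  rw [← Matrix.mulVec_mulVec, Matrix.dotProduct_mulVec (A := S)]
  rw [← hSymm, Matrix.vecMul_transpose, hSymm]

lemma exists_bound {H1 : Matrix α α ℝ} {H2 : Matrix β β ℝ}
   (h1 : H1.PosDef) (h2 : H2.PosDef) (M : Matrix β α ℝ) :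
    ∃ c : ℝ, 0 ≤ c ∧ ∀ u, vnorm H2 (M *ᵥ u) ≤ c * vnorm H1 u := by
  set S1 := h1.posSemidef.sqrt with hS1
  set S2 := h2.posSemidef.sqrt with hS2
  have hS1det : IsUnit S1.det := by
    have hd : S1.det * S1.det = H1.det := by
      rw [← Matrix.det_mul, h1.posSemidef.sqrt_mul_self]
    have : S1.det ≠ 0 := by
      intro h0
      have := h1.det_pos
      rw [← hd, h0, mul_zero] at this
      exact lt_irrefl _ this
    exact this.isUnit
  set c1 := Real.sqrt (∑ i, ∑ j, (S2 * M) i j ^ 2) with hc1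
  set c2 := Real.sqrt (∑ i, ∑ j, (S1⁻¹) i j ^ 2) with hc2
  refine ⟨c1 * c2, mul_nonneg (Real.sqrt_nonneg _) (Real.sqrt_nonneg _), fun u => ?_⟩
  have e1 : vnorm H2 (M *ᵥ u) = enorm ((S2 * M) *ᵥ u) := by
    rw [vnorm_eq_enorm_sqrt h2, Matrix.mulVec_mulVec]
  have e2 : enorm u ≤ c2 * enorm (S1 *ᵥ u) := by
    have : u = S1⁻¹ *ᵥ (S1 *ᵥ u) := by
      rw [Matrix.mulVec_mulVec, Matrix.nonsing_inv_mul _ hS1det, Matrix.one_mulVec]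
    calc enorm u = enorm (S1⁻¹ *ᵥ (S1 *ᵥ u)) := by rw [← this]
      _ ≤ c2 * enorm (S1 *ᵥ u) := enorm_mulVec_le _ _
  calc vnorm H2 (M *ᵥ u) = enorm ((S2 * M) *ᵥ u) := e1
    _ ≤ c1 * enorm u := enorm_mulVec_le _ _
    _ ≤ c1 * (c2 * enorm (S1 *ᵥ u)) :=
        mul_le_mul_of_nonneg_left e2 (Real.sqrt_nonneg _)
    _ = c1 * c2 * vnorm H1 u := by rw [vnorm_eq_enorm_sqrt h1]; ring

lemma wnorm_nonneg (H1 : Matrix α α ℝ) (H2 : Matrix β β ℝ) (M : Matrix β α ℝ) :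
    0 ≤ wnorm H1 H2 M := by
  apply Real.sSup_nonneg
  rintro r ⟨v, hv, rfl⟩
  exact div_nonneg (Real.sqrt_nonneg _) (Real.sqrt_nonneg _)

lemma vnorm_mulVec_le_wnorm {H1 : Matrix α α ℝ} {H2 : Matrix β β ℝ}
    (h1 : H1.PosDef) (h2 : H2.PosDef) (M : Matrix β α ℝ) (u : α → ℝ) :
    vnorm H2 (M *ᵥ u) ≤ wnorm H1 H2 M * vnorm H1 u := by
  by_cases hu : u = 0
  · subst hu
    simp [vnorm]
  · obtain ⟨c, hc0, hc⟩ := exists_bound h1 h2 M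
    have hb : BddAbove {r : ℝ | ∃ v, v ≠ 0 ∧ r = vnorm H2 (M *ᵥ v) / vnorm H1 v} := by
      refine ⟨c, ?_⟩
      rintro r ⟨v, hv, rfl⟩
      rw [div_le_iff₀ (vnorm_pos h1 hv)]
      exact hc v
    have hmem : vnorm H2 (M *ᵥ u) / vnorm H1 u ∈
        {r : ℝ | ∃ v, v ≠ 0 ∧ r = vnorm H2 (M *ᵥ v) / vnorm H1 v} := ⟨u, hu, rfl⟩
    have hle : vnorm H2 (M *ᵥ u) / vnorm H1 u ≤ wnorm H1 H2 M := le_csSup hb hmem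
    have hpos := vnorm_pos h1 hu
    calc vnorm H2 (M *ᵥ u) = vnorm H2 (M *ᵥ u) / vnorm H1 u * vnorm H1 u := by
          field_simp
      _ ≤ wnorm H1 H2 M * vnorm H1 u :=
          mul_le_mul_of_nonneg_right hle hpos.le

lemma dot_fromBlocks (H1 : Matrix α α ℝ) (H2 : Matrix β β ℝ) (x : α ⊕ β → ℝ) :
    x ⬝ᵥ (fromBlocks H1 0 0 H2 *ᵥ x)
      = (x ∘ Sum.inl) ⬝ᵥ (H1 *ᵥ (x ∘ Sum.inl)) + (x ∘ Sum.inr) ⬝ᵥ (H2 *ᵥ (x ∘ Sum.inr)) := by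
  rw [Matrix.fromBlocks_mulVec]
  simp [dotProduct, Fintype.sum_sum_type]

lemma posdef_fromBlocks {H1 : Matrix α α ℝ} {H2 : Matrix β β ℝ}
    (h1 : H1.PosDef) (h2 : H2.PosDef) : (fromBlocks H1 0 0 H2).PosDef := by
  refine Matrix.PosDef.of_dotProduct_mulVec_pos ?_ ?_
  · have e1 : H1ᴴ = H1 := h1.1
    have e2 : H2ᴴ = H2 := h2.1
    rw [Matrix.IsHermitian, Matrix.fromBlocks_conjTranspose, e1, e2]
    simp
  · intro x hx
    have key : ¬(x ∘ Sum.inl = 0 ∧ x ∘ Sum.inr = 0) := by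
      rintro ⟨ha, hb⟩
      apply hx
      funext i
      cases i with
      | inl i => exact congrFun ha i
      | inr i => exact congrFun hb i
    have hdot : 0 < x ⬝ᵥ (fromBlocks H1 0 0 H2 *ᵥ x) := by
      rw [dot_fromBlocks]
      by_cases h : x ∘ Sum.inl = 0
      · have hb : x ∘ Sum.inr ≠ 0 := fun hb => key ⟨h, hb⟩
        have := pd_dot_pos h2 hb
        have h0 : (x ∘ Sum.inl) ⬝ᵥ (H1 *ᵥ (x ∘ Sum.inl)) = 0 := by
          rw [h]; simp
        linarith
      · have := pd_dot_pos h1 h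
        have := psd_dot_nonneg h2.posSemidef (x ∘ Sum.inr)
        linarith
    simpa using hdot

end AuxStmt16

open AuxStmt16 in
theorem stmt_16
    {n m : ℕ} (F : Matrix (Fin n) (Fin n) ℝ) (B : Matrix (Fin m) (Fin n) ℝ)
    (H1 N : Matrix (Fin n) (Fin n) ℝ) (H2 : Matrix (Fin m) (Fin m) ℝ)
    (hH1 : H1 = ((1 : ℝ)/2) • (F + Fᵀ)) (hN : N = ((1 : ℝ)/2) • (F - Fᵀ))
    (hH1pd : H1.PosDef) (hH2pd : H2.PosDef)
    (hBrank : B.rank = m)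
    (C₄ : ℝ) (hC4 : 0 < C₄)
    (P₁ : Matrix (Fin n) (Fin n) ℝ) (hP₁ : IsUnit P₁.det)
    (hFP1 : wnorm H1 H1 (F⁻¹ * P₁) ≤ C₄)
    (K MU MUt H : Matrix (Fin n ⊕ Fin m) (Fin n ⊕ Fin m) ℝ)
    (hK : K = fromBlocks F Bᵀ B 0)
    (hMU : MU = fromBlocks F Bᵀ 0 H2)
    (hMUt : MUt = fromBlocks P₁ Bᵀ 0 H2)
    (hH : H = fromBlocks H1 0 0 H2)
    (hKns : IsUnit K.det) (hMUKns : IsUnit (MU⁻¹ * K).det) :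
    wnorm H H (MUt⁻¹ * K)⁻¹ ≤ (C₄ + 1) * wnorm H H (MU⁻¹ * K)⁻¹ := by
  -- F is invertible
  have hFker : ∀ x : Fin n → ℝ, F *ᵥ x = 0 → x = 0 := by
    intro x hx
    by_contra hxne
    have hpos : 0 < x ⬝ᵥ (H1 *ᵥ x) := pd_dot_pos hH1pd hxne
    have hzero : x ⬝ᵥ (H1 *ᵥ x) = 0 := by
      rw [hH1, Matrix.smul_mulVec, Matrix.add_mulVec, hx, zero_add,
        dotProduct_smul, Matrix.dotProduct_mulVec, Matrix.vecMul_transpose, hx]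
      simp
    linarith
  have hFinj : Function.Injective F.mulVec := by
    intro x y hxy
    have : F *ᵥ (x - y) = 0 := by
      rw [Matrix.mulVec_sub, hxy, sub_self]
    have := hFker _ this
    exact sub_eq_zero.1 this
  have hFdet : IsUnit F.det :=
    (Matrix.isUnit_iff_isUnit_det F).1 (Matrix.mulVec_injective_iff_isUnit.1 hFinj)
  have h2det : IsUnit H2.det := hH2pd.det_pos.ne'.isUnit
  have hMUdet : IsUnit MU.det := by
    rw [hMU, Matrix.det_fromBlocks_zero₂₁]
    exact hFdet.mul h2det
  have hMUtdet : IsUnit MUt.det := by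
    rw [hMUt, Matrix.det_fromBlocks_zero₂₁]
    exact hP₁.mul h2det
  set D : Matrix (Fin n ⊕ Fin m) (Fin n ⊕ Fin m) ℝ :=
    fromBlocks (F⁻¹ * P₁) 0 0 1 with hD
  have e1 : (MUt⁻¹ * K)⁻¹ = K⁻¹ * MUt := by
    rw [Matrix.mul_inv_rev, Matrix.nonsing_inv_nonsing_inv _ hMUtdet]
  have e2 : (MU⁻¹ * K)⁻¹ = K⁻¹ * MU := by
    rw [Matrix.mul_inv_rev, Matrix.nonsing_inv_nonsing_inv _ hMUdet]
  have eD : MU * D = MUt := by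
    rw [hMU, hMUt, hD, Matrix.fromBlocks_multiply, ← Matrix.mul_assoc,
      Matrix.mul_nonsing_inv _ hFdet]
    simp
  have e3 : K⁻¹ * MUt = (K⁻¹ * MU) * D := by
    rw [Matrix.mul_assoc, eD]
  have hHpd : H.PosDef := by
    rw [hH]; exact posdef_fromBlocks hH1pd hH2pd
  -- pointwise bound for F⁻¹P₁
  have hA : ∀ u : Fin n → ℝ, vnorm H1 ((F⁻¹ * P₁) *ᵥ u) ≤ C₄ * vnorm H1 u := by
    intro u
    calc vnorm H1 ((F⁻¹ * P₁) *ᵥ u) ≤ wnorm H1 H1 (F⁻¹ * P₁) * vnorm H1 u :=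
          vnorm_mulVec_le_wnorm hH1pd hH1pd _ u
      _ ≤ C₄ * vnorm H1 u := mul_le_mul_of_nonneg_right hFP1 (vnorm_nonneg _ _)
  -- bound on D
  have hw : ∀ v : Fin n ⊕ Fin m → ℝ, vnorm H (D *ᵥ v) ≤ (C₄ + 1) * vnorm H v := by
    intro v
    have hDv : D *ᵥ v = Sum.elim ((F⁻¹ * P₁) *ᵥ (v ∘ Sum.inl)) (v ∘ Sum.inr) := by
      rw [hD, Matrix.fromBlocks_mulVec]
      simp
    set a := (F⁻¹ * P₁) *ᵥ (v ∘ Sum.inl) with ha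
    set q1 := (v ∘ Sum.inl) ⬝ᵥ (H1 *ᵥ (v ∘ Sum.inl)) with hq1
    set q2 := (v ∘ Sum.inr) ⬝ᵥ (H2 *ᵥ (v ∘ Sum.inr)) with hq2
    have hq1n : 0 ≤ q1 := psd_dot_nonneg hH1pd.posSemidef _
    have hq2n : 0 ≤ q2 := psd_dot_nonneg hH2pd.posSemidef _
    have haq : a ⬝ᵥ (H1 *ᵥ a) ≤ C₄ ^ 2 * q1 := by
      have h := hA (v ∘ Sum.inl)
      have hsq : (vnorm H1 a) ^ 2 ≤ (C₄ * vnorm H1 (v ∘ Sum.inl)) ^ 2 :=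
        pow_le_pow_left₀ (vnorm_nonneg _ _) h 2
      rw [sq_vnorm hH1pd.posSemidef] at hsq
      calc a ⬝ᵥ (H1 *ᵥ a) ≤ (C₄ * vnorm H1 (v ∘ Sum.inl)) ^ 2 := hsq
        _ = C₄ ^ 2 * (vnorm H1 (v ∘ Sum.inl)) ^ 2 := by ring
        _ = C₄ ^ 2 * q1 := by rw [sq_vnorm hH1pd.posSemidef]
    have hL : vnorm H (D *ᵥ v) = Real.sqrt (a ⬝ᵥ (H1 *ᵥ a) + q2) := by
      rw [vnorm, hH, hDv, dot_fromBlocks]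
      simp [ha, hq2]
    have hR : vnorm H v = Real.sqrt (q1 + q2) := by
      rw [vnorm, hH, dot_fromBlocks]
    rw [hL, hR]
    have hC1 : (0:ℝ) ≤ C₄ + 1 := by linarith
    rw [show (C₄ + 1) * Real.sqrt (q1 + q2) = Real.sqrt ((C₄ + 1) ^ 2 * (q1 + q2)) by
      rw [Real.sqrt_mul (by positivity), Real.sqrt_sq hC1]]
    apply Real.sqrt_le_sqrt
    nlinarith [haq]
  -- main estimate
  rw [e1, e2, e3]
  have hRHS : 0 ≤ (C₄ + 1) * wnorm H H (K⁻¹ * MU) :=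
    mul_nonneg (by linarith) (wnorm_nonneg _ _ _)
  unfold wnorm
  apply Real.sSup_le _ hRHS
  rintro r ⟨v, hv, rfl⟩
  rw [div_le_iff₀ (vnorm_pos hHpd hv)]
  calc vnorm H ((K⁻¹ * MU * D) *ᵥ v) = vnorm H ((K⁻¹ * MU) *ᵥ (D *ᵥ v)) := by
        rw [Matrix.mulVec_mulVec]
    _ ≤ wnorm H H (K⁻¹ * MU) * vnorm H (D *ᵥ v) :=
        vnorm_mulVec_le_wnorm hHpd hHpd _ _
    _ ≤ wnorm H H (K⁻¹ * MU) * ((C₄ + 1) * vnorm H v) :=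
        mul_le_mul_of_nonneg_left (hw v) (wnorm_nonneg _ _ _)
    _ = (C₄ + 1) * wnorm H H (K⁻¹ * MU) * vnorm H v := by ring
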